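/- arXiv:2505.01427 — 4 statements merged into one kernel-verified Lean document; each statement's English description precedes it below -/
import Mathlib

section
/- Let M = [A₁,…,A_k] have rank r and M̃ = [A₁+E₁,…,A_k+E_k]. Then for i = 1,…,r, |σ_i(M̃) − σ_i(M)| ≤ (1/σ_i(M)) · Σ_{j=1}^k (2‖A_j‖₂‖E_j‖₂ + ‖E_j‖₂²). -/
open Matrix Finset

/-- Spectral (ℓ²-operator) norm of a matrix. -/
noncomputable def specNorm {m n : Type*} [Fintype m] [Fintype n] [DecidableEq n]
    (A : Matrix m n ℝ) : ℝ :=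
  ‖LinearMap.toContinuousLinearMap (Matrix.toEuclideanLin A)‖

/-- Eigenvalues of a real symmetric matrix, in nonincreasing order (0-based);
returns 0 if the matrix is not Hermitian. -/
noncomputable def eigDesc {n : ℕ} (A : Matrix (Fin n) (Fin n) ℝ) : Fin n → ℝ :=
  if hA : A.IsHermitian then
    fun i => hA.eigenvalues (Tuple.sort hA.eigenvalues i.rev)
  else fun _ => 0

/-- The `i`-th largest singular value (0-based), defined as the square root of the
`i`-th largest eigenvalue of `Aᵀ * A`; zero for out-of-range indices. -/
noncomputable def sval {m n : ℕ} (A : Matrix (Fin m) (Fin n) ℝ) (i : ℕ) : ℝ :=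
  if h : i < n then Real.sqrt (eigDesc (Aᵀ * A) ⟨i, h⟩) else 0

/-- Horizontal concatenation of `k` matrices of size `m × n`. -/
noncomputable def hconcat {m n k : ℕ} (A : Fin k → Matrix (Fin m) (Fin n) ℝ) :
    Matrix (Fin m) (Fin (k * n)) ℝ :=
  Matrix.of fun i j => A (finProdFinEquiv.symm j).1 i (finProdFinEquiv.symm j).2

open scoped Matrix.Norms.L2Operator

namespace SVDAux

variable {N : ℕ}

lemma specNorm_eq {m n : Type*} [Fintype m] [Fintype n] [DecidableEq n] (A : Matrix m n ℝ) :
    specNorm A = ‖A‖ := rfl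

lemma conjT_eq {m n : Type*} (A : Matrix m n ℝ) : Aᴴ = Aᵀ := by
  ext i j; simp [conjTranspose_apply]

/-- quadratic form of a square matrix -/
noncomputable def q (S : Matrix (Fin N) (Fin N) ℝ) (x : EuclideanSpace ℝ (Fin N)) : ℝ :=
  inner ℝ x (Matrix.toEuclideanLin S x)

lemma norm_toEuclideanLin_apply_le {m n : Type*} [Fintype m] [Fintype n] [DecidableEq n]
    (M : Matrix m n ℝ) (x : EuclideanSpace ℝ n) :
    ‖Matrix.toEuclideanLin M x‖ ≤ ‖M‖ * ‖x‖ := by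
  exact (LinearMap.toContinuousLinearMap (Matrix.toEuclideanLin M)).le_opNorm x

lemma toEuclideanLin_mul {a b c : Type*} [Fintype a] [Fintype b] [Fintype c]
    [DecidableEq b] [DecidableEq c] (X : Matrix a b ℝ) (Y : Matrix b c ℝ)
    (x : EuclideanSpace ℝ c) :
    Matrix.toEuclideanLin (X * Y) x = Matrix.toEuclideanLin X (Matrix.toEuclideanLin Y x) := by
  apply (WithLp.equiv 2 (a → ℝ)).injective
  simp [Matrix.mulVec_mulVec]

lemma herm_tm {mm nn : ℕ} (M : Matrix (Fin mm) (Fin nn) ℝ) : (Mᵀ * M).IsHermitian := by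
  rw [← conjT_eq]; exact Matrix.isHermitian_conjTranspose_mul_self M

lemma herm_mt {mm nn : ℕ} (M : Matrix (Fin mm) (Fin nn) ℝ) : (M * Mᵀ).IsHermitian := by
  rw [← conjT_eq]; exact Matrix.isHermitian_mul_conjTranspose_self M

lemma psd_tm {mm nn : ℕ} (M : Matrix (Fin mm) (Fin nn) ℝ) : (Mᵀ * M).PosSemidef := by
  rw [← conjT_eq]; exact Matrix.posSemidef_conjTranspose_mul_self M

lemma psd_mt {mm nn : ℕ} (M : Matrix (Fin mm) (Fin nn) ℝ) : (M * Mᵀ).PosSemidef := by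
  rw [← conjT_eq]; exact Matrix.posSemidef_self_mul_conjTranspose M

lemma toEuclideanLin_basis {S : Matrix (Fin N) (Fin N) ℝ} (hS : S.IsHermitian) (j : Fin N) :
    Matrix.toEuclideanLin S (hS.eigenvectorBasis j) =
      hS.eigenvalues j • hS.eigenvectorBasis j := by
  have h := hS.mulVec_eigenvectorBasis j
  apply (WithLp.equiv 2 (Fin N → ℝ)).injective
  simpa [Matrix.toEuclideanLin_apply] using h

lemma q_eq_sum {S : Matrix (Fin N) (Fin N) ℝ} (hS : S.IsHermitian) (x : EuclideanSpace ℝ (Fin N)) :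
    q S x = ∑ j, hS.eigenvalues j * (inner ℝ (hS.eigenvectorBasis j) x : ℝ) ^ 2 := by
  classical
  set b := hS.eigenvectorBasis with hb
  have hx : ∑ j, (inner ℝ (b j) x : ℝ) • b j = x := b.sum_repr' x
  calc q S x = inner ℝ x (Matrix.toEuclideanLin S (∑ j, (inner ℝ (b j) x : ℝ) • b j)) := by
        rw [q, hx]
    _ = ∑ j, hS.eigenvalues j * (inner ℝ (b j) x : ℝ) ^ 2 := by
        rw [map_sum, inner_sum]
        refine Finset.sum_congr rfl fun j _ => ?_
        rw [_root_.map_smul, toEuclideanLin_basis hS]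
        rw [real_inner_smul_right, real_inner_smul_right, real_inner_comm]
        ring

lemma normsq_eq_sum (b : OrthonormalBasis (Fin N) ℝ (EuclideanSpace ℝ (Fin N)))
    (x : EuclideanSpace ℝ (Fin N)) :
    ‖x‖ ^ 2 = ∑ j, (inner ℝ (b j) x : ℝ) ^ 2 := by
  have hx : ∑ j, (inner ℝ (b j) x : ℝ) • b j = x := b.sum_repr' x
  have h : (inner ℝ x x : ℝ) = ∑ j, (inner ℝ (b j) x : ℝ) ^ 2 := by
    nth_rewrite 1 [← hx]
    rw [sum_inner]
    refine Finset.sum_congr rfl fun j _ => ?_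
    rw [real_inner_smul_left, sq]
  rw [← real_inner_self_eq_norm_sq, h]

lemma inner_eq_zero_of_mem_span (b : OrthonormalBasis (Fin N) ℝ (EuclideanSpace ℝ (Fin N)))
    (s : Finset (Fin N)) {x : EuclideanSpace ℝ (Fin N)}
    (hx : x ∈ Submodule.span ℝ (b '' ↑s)) {l : Fin N} (hl : l ∉ s) :
    (inner ℝ (b l) x : ℝ) = 0 := by
  induction hx using Submodule.span_induction with
  | mem y hy =>
      obtain ⟨j, hj, rfl⟩ := hy
      exact b.orthonormal.2 fun h => hl (h ▸ hj)
  | zero => simp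
  | add u v _ _ hu hv => rw [inner_add_right, hu, hv, add_zero]
  | smul a u _ hu => rw [inner_smul_right, hu, mul_zero]

lemma finrank_span_ob (b : OrthonormalBasis (Fin N) ℝ (EuclideanSpace ℝ (Fin N)))
    (s : Finset (Fin N)) :
    Module.finrank ℝ (Submodule.span ℝ (b '' ↑s)) = s.card := by
  have hli : LinearIndependent ℝ (fun j : s => b j) :=
    b.orthonormal.linearIndependent.comp _ Subtype.val_injective
  have himg : (b '' ↑s) = Set.range (fun j : s => b j) := by
    ext y
    simp only [Set.mem_image, Set.mem_range, Finset.mem_coe]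
    constructor
    · rintro ⟨j, hj, rfl⟩; exact ⟨⟨j, hj⟩, rfl⟩
    · rintro ⟨⟨j, hj⟩, rfl⟩; exact ⟨j, hj, rfl⟩
  rw [himg, finrank_span_eq_card hli, Fintype.card_coe]

/-- descending index permutation -/
noncomputable def dp {S : Matrix (Fin N) (Fin N) ℝ} (hS : S.IsHermitian) : Fin N → Fin N :=
  fun i => Tuple.sort hS.eigenvalues i.rev

lemma dp_injective {S : Matrix (Fin N) (Fin N) ℝ} (hS : S.IsHermitian) :
    Function.Injective (dp hS) :=
  (Tuple.sort hS.eigenvalues).injective.comp fun _ _ h => Fin.rev_injective h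

lemma eigDesc_eq {S : Matrix (Fin N) (Fin N) ℝ} (hS : S.IsHermitian) (i : Fin N) :
    eigDesc S i = hS.eigenvalues (dp hS i) := by
  rw [eigDesc, dif_pos hS]; rfl

lemma eigDesc_anti {S : Matrix (Fin N) (Fin N) ℝ} (hS : S.IsHermitian) :
    Antitone (eigDesc S) := by
  intro i j hij
  rw [eigDesc_eq hS, eigDesc_eq hS]
  have := Tuple.monotone_sort hS.eigenvalues (Fin.rev_le_rev.mpr hij)
  simpa [dp] using this

lemma q_ge_on_span {S : Matrix (Fin N) (Fin N) ℝ} (hS : S.IsHermitian) (s : Finset (Fin N))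
    (c : ℝ) (hc : ∀ j ∈ s, c ≤ hS.eigenvalues j) {x : EuclideanSpace ℝ (Fin N)}
    (hx : x ∈ Submodule.span ℝ (hS.eigenvectorBasis '' ↑s)) :
    c * ‖x‖ ^ 2 ≤ q S x := by
  rw [q_eq_sum hS, normsq_eq_sum hS.eigenvectorBasis, Finset.mul_sum]
  apply Finset.sum_le_sum
  intro j _
  by_cases hj : j ∈ s
  · exact mul_le_mul_of_nonneg_right (hc j hj) (sq_nonneg _)
  · rw [inner_eq_zero_of_mem_span _ s hx hj]; simp

lemma q_le_on_span {S : Matrix (Fin N) (Fin N) ℝ} (hS : S.IsHermitian) (s : Finset (Fin N))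
    (c : ℝ) (hc : ∀ j ∈ s, hS.eigenvalues j ≤ c) {x : EuclideanSpace ℝ (Fin N)}
    (hx : x ∈ Submodule.span ℝ (hS.eigenvectorBasis '' ↑s)) :
    q S x ≤ c * ‖x‖ ^ 2 := by
  rw [q_eq_sum hS, normsq_eq_sum hS.eigenvectorBasis, Finset.mul_sum]
  apply Finset.sum_le_sum
  intro j _
  by_cases hj : j ∈ s
  · exact mul_le_mul_of_nonneg_right (hc j hj) (sq_nonneg _)
  · rw [inner_eq_zero_of_mem_span _ s hx hj]; simp

lemma cf1 {S : Matrix (Fin N) (Fin N) ℝ} (hS : S.IsHermitian) (i : Fin N) :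
    ∃ V : Submodule ℝ (EuclideanSpace ℝ (Fin N)), Module.finrank ℝ V = (i : ℕ) + 1 ∧
      ∀ x ∈ V, eigDesc S i * ‖x‖ ^ 2 ≤ q S x := by
  classical
  set s : Finset (Fin N) := Finset.image (dp hS) (Finset.Iic i) with hs
  refine ⟨Submodule.span ℝ (hS.eigenvectorBasis '' ↑s), ?_, ?_⟩
  · rw [finrank_span_ob, hs, Finset.card_image_of_injective _ (dp_injective hS), Fin.card_Iic]
  · intro x hx
    refine q_ge_on_span hS s _ (fun j hj => ?_) hx
    rw [hs, Finset.mem_image] at hj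
    obtain ⟨j', hj', rfl⟩ := hj
    rw [← eigDesc_eq hS]
    exact eigDesc_anti hS (Finset.mem_Iic.mp hj')

lemma cf2 {S : Matrix (Fin N) (Fin N) ℝ} (hS : S.IsHermitian) (i : Fin N)
    (V : Submodule ℝ (EuclideanSpace ℝ (Fin N))) (hV : (i : ℕ) + 1 ≤ Module.finrank ℝ V) :
    ∃ x ∈ V, x ≠ 0 ∧ q S x ≤ eigDesc S i * ‖x‖ ^ 2 := by
  classical
  set s : Finset (Fin N) := Finset.image (dp hS) (Finset.Ici i) with hs
  set W := Submodule.span ℝ (hS.eigenvectorBasis '' ↑s) with hW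
  have hWrank : Module.finrank ℝ W = N - i := by
    rw [hW, finrank_span_ob, hs, Finset.card_image_of_injective _ (dp_injective hS),
      Fin.card_Ici]
  have h1 := Submodule.finrank_sup_add_finrank_inf_eq V W
  have h2 : Module.finrank ℝ ↥(V ⊔ W) ≤ N := by
    simpa [finrank_euclideanSpace_fin] using Submodule.finrank_le (V ⊔ W)
  have hilt : (i : ℕ) < N := i.isLt
  have hdim : 0 < Module.finrank ℝ ↥(V ⊓ W) := by omega
  have hne : V ⊓ W ≠ ⊥ := by
    intro h
    rw [h] at hdim
    simp at hdim
  obtain ⟨x, hxm, hx0⟩ := Submodule.exists_mem_ne_zero_of_ne_bot hne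
  refine ⟨x, hxm.1, hx0, ?_⟩
  refine q_le_on_span hS s _ (fun j hj => ?_) hxm.2
  rw [hs, Finset.mem_image] at hj
  obtain ⟨j', hj', rfl⟩ := hj
  rw [← eigDesc_eq hS]
  exact eigDesc_anti hS (Finset.mem_Ici.mp hj')

lemma weyl_le {S T : Matrix (Fin N) (Fin N) ℝ} (hS : S.IsHermitian) (hT : T.IsHermitian)
    (i : Fin N) : eigDesc S i ≤ eigDesc T i + ‖S - T‖ := by
  obtain ⟨V, hVrank, hV⟩ := cf1 hS i
  obtain ⟨x, hxV, hx0, hxq⟩ := cf2 hT i V hVrank.ge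
  have hdiff : q S x - q T x = inner ℝ x (Matrix.toEuclideanLin (S - T) x) := by
    rw [q, q, map_sub (Matrix.toEuclideanLin (𝕜 := ℝ)), LinearMap.sub_apply,
      inner_sub_right]
  have hb : (inner ℝ x (Matrix.toEuclideanLin (S - T) x) : ℝ) ≤ ‖S - T‖ * ‖x‖ ^ 2 :=
    calc (inner ℝ x (Matrix.toEuclideanLin (S - T) x) : ℝ)
        ≤ ‖x‖ * ‖Matrix.toEuclideanLin (S - T) x‖ := real_inner_le_norm _ _
      _ ≤ ‖x‖ * (‖S - T‖ * ‖x‖) := by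
          gcongr
          exact norm_toEuclideanLin_apply_le _ _
      _ = ‖S - T‖ * ‖x‖ ^ 2 := by ring
  have h1 : eigDesc S i * ‖x‖ ^ 2 ≤ q S x := hV x hxV
  have hn : (0 : ℝ) < ‖x‖ ^ 2 := by
    have := norm_pos_iff.mpr hx0
    positivity
  have : eigDesc S i * ‖x‖ ^ 2 ≤ (eigDesc T i + ‖S - T‖) * ‖x‖ ^ 2 := by nlinarith
  exact le_of_mul_le_mul_right this hn

lemma weyl_abs {S T : Matrix (Fin N) (Fin N) ℝ} (hS : S.IsHermitian) (hT : T.IsHermitian)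
    (i : Fin N) : |eigDesc S i - eigDesc T i| ≤ ‖S - T‖ := by
  rw [abs_sub_le_iff]
  constructor
  · linarith [weyl_le hS hT i]
  · have := weyl_le hT hS i
    rw [norm_sub_rev] at this
    linarith

lemma q_transpose_mul (mm : ℕ) (M : Matrix (Fin mm) (Fin N) ℝ) (x : EuclideanSpace ℝ (Fin N)) :
    q (Mᵀ * M) x = ‖Matrix.toEuclideanLin M x‖ ^ 2 := by
  rw [q, toEuclideanLin_mul, ← conjT_eq, Matrix.toEuclideanLin_conjTranspose_eq_adjoint,
    LinearMap.adjoint_inner_right, real_inner_self_eq_norm_sq]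

lemma eigDesc_nonneg {S : Matrix (Fin N) (Fin N) ℝ} (hS : S.PosSemidef) (i : Fin N) :
    0 ≤ eigDesc S i := by
  rw [eigDesc_eq hS.1]
  exact hS.eigenvalues_nonneg _

set_option maxHeartbeats 800000 in
lemma transfer_le {mm nn : ℕ} (M : Matrix (Fin mm) (Fin nn) ℝ) (i : ℕ) (hin : i < nn)
    (him : i < mm) (hpos : 0 < eigDesc (Mᵀ * M) ⟨i, hin⟩) :
    eigDesc (Mᵀ * M) ⟨i, hin⟩ ≤ eigDesc (M * Mᵀ) ⟨i, him⟩ := by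
  set μ := eigDesc (Mᵀ * M) ⟨i, hin⟩ with hμ
  obtain ⟨V, hVrank, hV⟩ := cf1 (herm_tm M) ⟨i, hin⟩
  set f := Matrix.toEuclideanLin M with hf
  set g := Matrix.toEuclideanLin Mᵀ with hg
  set V' := V.map f with hV'
  have hVq : ∀ x ∈ V, μ * ‖x‖ ^ 2 ≤ ‖f x‖ ^ 2 := by
    intro x hx
    have := hV x hx
    rwa [q_transpose_mul] at this
  have hinj : ∀ x ∈ V, f x = 0 → x = 0 := by
    intro x hx hfx
    have h1 := hVq x hx
    rw [hfx] at h1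
    simp only [norm_zero] at h1
    have h2 : ‖x‖ ^ 2 ≤ 0 := by nlinarith
    have h3 : ‖x‖ = 0 := by nlinarith [norm_nonneg x]
    exact norm_eq_zero.mp h3
  have hrank' : Module.finrank ℝ V' = i + 1 := by
    have hker : LinearMap.ker (f.domRestrict V) = ⊥ := by
      rw [LinearMap.ker_eq_bot']
      rintro ⟨x, hx⟩ hfx
      have hfx' : f x = 0 := by simpa using hfx
      exact Subtype.ext (hinj x hx hfx')
    have hr := LinearMap.finrank_range_add_finrank_ker (f.domRestrict V)
    rw [hker, finrank_bot, add_zero, LinearMap.range_domRestrict] at hr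
    rw [hV', hr, hVrank]
  have hV'q : ∀ y ∈ V', μ * ‖y‖ ^ 2 ≤ q (M * Mᵀ) y := by
    rintro y hy
    obtain ⟨x, hx, rfl⟩ := Submodule.mem_map.mp hy
    have hq : q (M * Mᵀ) (f x) = ‖g (f x)‖ ^ 2 := by
      have := q_transpose_mul nn Mᵀ (f x)
      rwa [Matrix.transpose_transpose] at this
    rw [hq]
    by_cases hx0 : x = 0
    · simp [hx0]
    · have h1 : μ * ‖x‖ ^ 2 ≤ ‖f x‖ ^ 2 := hVq x hx
      have hcs : ‖f x‖ ^ 2 ≤ ‖x‖ * ‖g (f x)‖ := by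
        have hadj : (inner ℝ (f x) (f x) : ℝ) = inner ℝ x (g (f x)) := by
          rw [hg, ← conjT_eq, Matrix.toEuclideanLin_conjTranspose_eq_adjoint,
            LinearMap.adjoint_inner_right]
        calc ‖f x‖ ^ 2 = (inner ℝ (f x) (f x) : ℝ) := (real_inner_self_eq_norm_sq _).symm
          _ = inner ℝ x (g (f x)) := hadj
          _ ≤ ‖x‖ * ‖g (f x)‖ := real_inner_le_norm _ _
      have ha : (0 : ℝ) < ‖x‖ ^ 2 := by
        have := norm_pos_iff.mpr hx0
        positivity
      have h4 : ‖f x‖ ^ 2 * (μ * ‖x‖ ^ 2) ≤ ‖f x‖ ^ 2 * ‖f x‖ ^ 2 :=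
        mul_le_mul_of_nonneg_left h1 (sq_nonneg _)
      have h5 : ‖f x‖ ^ 2 * ‖f x‖ ^ 2 ≤ (‖x‖ * ‖g (f x)‖) * (‖x‖ * ‖g (f x)‖) :=
        mul_self_le_mul_self (sq_nonneg _) hcs
      have h7 := h4.trans h5
      have h8 : (μ * ‖f x‖ ^ 2) * ‖x‖ ^ 2 ≤ (‖g (f x)‖ ^ 2) * ‖x‖ ^ 2 := by
        ring_nf at h7 ⊢
        linarith
      exact le_of_mul_le_mul_right h8 ha
  obtain ⟨y, hyV', hy0, hyq⟩ := cf2 (herm_mt M) ⟨i, him⟩ V' (by rw [hrank'])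
  have h6 := hV'q y hyV'
  have hy2 : (0 : ℝ) < ‖y‖ ^ 2 := by
    have := norm_pos_iff.mpr hy0
    positivity
  have h9 : μ * ‖y‖ ^ 2 ≤ eigDesc (M * Mᵀ) ⟨i, him⟩ * ‖y‖ ^ 2 := h6.trans hyq
  exact le_of_mul_le_mul_right (by linarith) hy2

lemma transfer_eq {mm nn : ℕ} (M : Matrix (Fin mm) (Fin nn) ℝ) (i : ℕ) (hin : i < nn)
    (him : i < mm) : eigDesc (Mᵀ * M) ⟨i, hin⟩ = eigDesc (M * Mᵀ) ⟨i, him⟩ := by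
  rcases lt_or_ge 0 (eigDesc (Mᵀ * M) ⟨i, hin⟩) with h | h
  · have h1 := transfer_le M i hin him h
    have h2 : 0 < eigDesc (M * Mᵀ) ⟨i, him⟩ := lt_of_lt_of_le h h1
    have h3 := transfer_le Mᵀ i him hin (by rw [Matrix.transpose_transpose]; exact h2)
    rw [Matrix.transpose_transpose] at h3
    exact le_antisymm h1 h3
  · have e1 : eigDesc (Mᵀ * M) ⟨i, hin⟩ = 0 :=
      le_antisymm h (eigDesc_nonneg (psd_tm M) _)
    have e2 : eigDesc (M * Mᵀ) ⟨i, him⟩ = 0 := by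
      rcases lt_or_ge 0 (eigDesc (M * Mᵀ) ⟨i, him⟩) with h' | h'
      · have h3 := transfer_le Mᵀ i him hin (by rw [Matrix.transpose_transpose]; exact h')
        rw [Matrix.transpose_transpose] at h3
        linarith
      · exact le_antisymm h' (eigDesc_nonneg (psd_mt M) _)
    rw [e1, e2]

lemma eigDesc_pos_of_lt_rank {mm nn : ℕ} (M : Matrix (Fin mm) (Fin nn) ℝ) (i : ℕ)
    (hi : i < M.rank) (hin : i < nn) : 0 < eigDesc (Mᵀ * M) ⟨i, hin⟩ := by
  by_contra hle
  push_neg at hle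
  have hH := herm_tm M
  have h0 : eigDesc (Mᵀ * M) ⟨i, hin⟩ = 0 := le_antisymm hle (eigDesc_nonneg (psd_tm M) _)
  have hcard : M.rank = Fintype.card {l // hH.eigenvalues l ≠ 0} := by
    rw [← Matrix.rank_transpose_mul_self M]
    exact hH.rank_eq_card_non_zero_eigs
  -- descending permutation as an equivalence
  have hbij : Function.Bijective (dp hH) :=
    (Fintype.bijective_iff_injective_and_card _).mpr ⟨dp_injective hH, rfl⟩
  let ep : Fin nn ≃ Fin nn := Equiv.ofBijective _ hbij
  have hepc : Fintype.card {j // hH.eigenvalues (dp hH j) ≠ 0}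
      = Fintype.card {l // hH.eigenvalues l ≠ 0} :=
    Fintype.card_congr (Equiv.subtypeEquiv ep (fun j => Iff.rfl))
  have hinj : Function.Injective
      (fun j : {j : Fin nn // hH.eigenvalues (dp hH j) ≠ 0} =>
        (⟨(j : Fin nn), by
          by_contra hge
          push_neg at hge
          have hji : (⟨i, hin⟩ : Fin nn) ≤ (j : Fin nn) := by
            simpa [Fin.le_def] using hge
          have hlez : eigDesc (Mᵀ * M) (j : Fin nn) ≤ 0 :=
            (eigDesc_anti hH hji).trans (le_of_eq h0)
          have hgez : 0 ≤ eigDesc (Mᵀ * M) (j : Fin nn) := eigDesc_nonneg (psd_tm M) _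
          exact j.2 (by rw [← eigDesc_eq hH]; linarith)⟩ : Fin i)) := by
    intro a b hab
    apply Subtype.ext
    apply Fin.ext
    simpa [Fin.ext_iff] using hab
  have hle2 : Fintype.card {j : Fin nn // hH.eigenvalues (dp hH j) ≠ 0} ≤ i := by
    simpa using Fintype.card_le_of_injective _ hinj
  omega

lemma hconcat_mul_transpose {m n k : ℕ} (A : Fin k → Matrix (Fin m) (Fin n) ℝ) :
    hconcat A * (hconcat A)ᵀ = ∑ j, A j * (A j)ᵀ := by
  ext a b
  have h1 : (hconcat A * (hconcat A)ᵀ) a b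
      = ∑ j : Fin (k * n), (fun pq : Fin k × Fin n => A pq.1 a pq.2 * A pq.1 b pq.2)
          (finProdFinEquiv.symm j) := by
    simp [Matrix.mul_apply, hconcat, Matrix.transpose_apply]
  have h2 : (∑ j : Fin k, A j * (A j)ᵀ) a b
      = ∑ pq : Fin k × Fin n, (fun pq : Fin k × Fin n => A pq.1 a pq.2 * A pq.1 b pq.2) pq := by
    simp [Matrix.sum_apply, Matrix.mul_apply, Matrix.transpose_apply, Fintype.sum_prod_type]
  rw [h1, h2]
  exact Equiv.sum_comp finProdFinEquiv.symm
    (fun pq : Fin k × Fin n => A pq.1 a pq.2 * A pq.1 b pq.2)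

end SVDAux

theorem stmt7 {m n k : ℕ} (A E : Fin k → Matrix (Fin m) (Fin n) ℝ)
    (i : ℕ) (hi : i < (hconcat A).rank) :
    |sval (hconcat fun j => A j + E j) i - sval (hconcat A) i|
      ≤ (1 / sval (hconcat A) i)
          * ∑ j, (2 * specNorm (A j) * specNorm (E j) + specNorm (E j) ^ 2) := by
  classical
  set M := hconcat A with hM
  set Mt := hconcat (fun j => A j + E j) with hMt
  have hkn : i < k * n := lt_of_lt_of_le hi (Matrix.rank_le_width M)
  have him : i < m := lt_of_lt_of_le hi (Matrix.rank_le_height M)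
  set μ := eigDesc (Mᵀ * M) ⟨i, hkn⟩ with hμdef
  set ν := eigDesc (Mtᵀ * Mt) ⟨i, hkn⟩ with hνdef
  have hμpos : 0 < μ := SVDAux.eigDesc_pos_of_lt_rank M i hi hkn
  have hνnn : 0 ≤ ν := SVDAux.eigDesc_nonneg (SVDAux.psd_tm Mt) _
  have hsv : sval M i = Real.sqrt μ := by rw [sval, dif_pos hkn]
  have hsvt : sval Mt i = Real.sqrt ν := by rw [sval, dif_pos hkn]
  have hμ' : μ = eigDesc (M * Mᵀ) ⟨i, him⟩ := SVDAux.transfer_eq M i hkn him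
  have hν' : ν = eigDesc (Mt * Mtᵀ) ⟨i, him⟩ := SVDAux.transfer_eq Mt i hkn him
  have hweyl : |ν - μ| ≤ ‖Mt * Mtᵀ - M * Mᵀ‖ := by
    rw [hμ', hν']
    exact SVDAux.weyl_abs (SVDAux.herm_mt Mt) (SVDAux.herm_mt M) ⟨i, him⟩
  set Sb := ∑ j, (2 * specNorm (A j) * specNorm (E j) + specNorm (E j) ^ 2) with hSb
  have hdiffM : Mt * Mtᵀ - M * Mᵀ
      = ∑ j, (A j * (E j)ᵀ + E j * (A j)ᵀ + E j * (E j)ᵀ) := by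
    rw [hMt, hM, SVDAux.hconcat_mul_transpose, SVDAux.hconcat_mul_transpose,
      ← Finset.sum_sub_distrib]
    refine Finset.sum_congr rfl fun j _ => ?_
    rw [Matrix.transpose_add, Matrix.add_mul, Matrix.mul_add, Matrix.mul_add]
    abel
  have hnorm : ‖Mt * Mtᵀ - M * Mᵀ‖ ≤ Sb := by
    rw [hdiffM]
    refine (norm_sum_le _ _).trans ?_
    apply Finset.sum_le_sum
    intro j _
    have h1 : ‖A j * (E j)ᵀ‖ ≤ ‖A j‖ * ‖E j‖ := by
      have h := Matrix.l2_opNorm_mul (A j) (E j)ᵀ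
      rwa [← SVDAux.conjT_eq, Matrix.l2_opNorm_conjTranspose] at h
    have h2 : ‖E j * (A j)ᵀ‖ ≤ ‖E j‖ * ‖A j‖ := by
      have h := Matrix.l2_opNorm_mul (E j) (A j)ᵀ
      rwa [← SVDAux.conjT_eq, Matrix.l2_opNorm_conjTranspose] at h
    have h3 : ‖E j * (E j)ᵀ‖ ≤ ‖E j‖ * ‖E j‖ := by
      have h := Matrix.l2_opNorm_mul (E j) (E j)ᵀ
      rwa [← SVDAux.conjT_eq, Matrix.l2_opNorm_conjTranspose] at h
    have h4 : ‖A j * (E j)ᵀ + E j * (A j)ᵀ + E j * (E j)ᵀ‖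
        ≤ ‖A j * (E j)ᵀ‖ + ‖E j * (A j)ᵀ‖ + ‖E j * (E j)ᵀ‖ :=
      (norm_add_le _ _).trans (by gcongr; exact norm_add_le _ _)
    rw [SVDAux.specNorm_eq, SVDAux.specNorm_eq]
    nlinarith [norm_nonneg (A j), norm_nonneg (E j)]
  have hσpos : 0 < Real.sqrt μ := Real.sqrt_pos.mpr hμpos
  have hprod : (Real.sqrt ν - Real.sqrt μ) * (Real.sqrt ν + Real.sqrt μ) = ν - μ := by
    have h1 := Real.sq_sqrt hνnn
    have h2 := Real.sq_sqrt hμpos.le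
    linear_combination h1 - h2
  have key : |Real.sqrt ν - Real.sqrt μ| * Real.sqrt μ ≤ Sb := by
    calc |Real.sqrt ν - Real.sqrt μ| * Real.sqrt μ
        ≤ |Real.sqrt ν - Real.sqrt μ| * (Real.sqrt ν + Real.sqrt μ) := by
          apply mul_le_mul_of_nonneg_left ?_ (abs_nonneg _)
          linarith [Real.sqrt_nonneg ν]
      _ = |(Real.sqrt ν - Real.sqrt μ) * (Real.sqrt ν + Real.sqrt μ)| := by
          rw [abs_mul, abs_of_nonneg
            (show (0:ℝ) ≤ Real.sqrt ν + Real.sqrt μ by positivity)]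
      _ = |ν - μ| := by rw [hprod]
      _ ≤ Sb := hweyl.trans hnorm
  rw [hsvt, hsv, one_div, inv_mul_eq_div, le_div_iff₀ hσpos]
  exact key
end

section
/- Let M = [A₁,…,A_k] have rank r and M̃ = [A₁+E₁,…,A_k+E_k]. Then for every index i > r (i.e., where σ_i(M) = 0), σ_i(M̃) ≤ √(Σ_{j=1}^k (2‖A_j‖₂‖E_j‖₂ + ‖E_j‖₂²)). -/
open Matrix Finset

open Module

section Aux

/-- If at most `i` values of `f` exceed `c`, then the `i`-th largest value of `f` is `≤ c`. -/
lemma aux_sorted_le_of_count_le {N : ℕ} (f : Fin N → ℝ) (c : ℝ) {i : ℕ} (h : i < N)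
    (hc : (univ.filter fun j => c < f j).card ≤ i) :
    f (Tuple.sort f (Fin.rev ⟨i, h⟩)) ≤ c := by
  by_contra hlt
  push_neg at hlt
  have hmono := Tuple.monotone_sort f
  have hsub : Finset.Ici (Fin.rev ⟨i, h⟩) ⊆
      univ.filter (fun p => c < f (Tuple.sort f p)) := by
    intro p hp
    exact mem_filter.2 ⟨mem_univ _, lt_of_lt_of_le hlt (hmono (mem_Ici.1 hp))⟩
  have h1 : N - (Fin.rev (⟨i, h⟩ : Fin N)).val ≤
      (univ.filter fun p => c < f (Tuple.sort f p)).card := by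
    rw [← Fin.card_Ici]; exact card_le_card hsub
  have h2 : (univ.filter fun p => c < f (Tuple.sort f p)).card
      = (univ.filter fun j => c < f j).card := by
    apply Finset.card_bij (fun p _ => Tuple.sort f p)
    · intro p hp; simpa using (mem_filter.1 hp).2
    · intro a ha b hb hab; exact (Tuple.sort f).injective hab
    · intro j hj
      exact ⟨(Tuple.sort f).symm j, by simpa using (mem_filter.1 hj).2, by simp⟩
  rw [h2] at h1
  have hrev : (Fin.rev (⟨i, h⟩ : Fin N)).val = N - 1 - i := by simp [Fin.val_rev]; omega
  omega

/-- Counting eigenvalues above `c` against a subspace where the quadratic form is `≤ c`. -/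
lemma aux_count_eigen {N : ℕ} {B : Matrix (Fin N) (Fin N) ℝ} (hB : B.IsHermitian) {c : ℝ}
    (K : Submodule ℝ (EuclideanSpace ℝ (Fin N)))
    (hq : ∀ x ∈ K, (inner ℝ x (Matrix.toEuclideanLin B x) : ℝ) ≤ c * ‖x‖ ^ 2) :
    (univ.filter fun j => c < hB.eigenvalues j).card + finrank ℝ K ≤ N := by
  classical
  set b := hB.eigenvectorBasis with hb
  set S : Finset (Fin N) := univ.filter fun j => c < hB.eigenvalues j with hS
  set v : S → EuclideanSpace ℝ (Fin N) := fun j => b j with hv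
  have hortho : Orthonormal ℝ v := b.orthonormal.comp _ Subtype.val_injective
  have hli : LinearIndependent ℝ v := hortho.linearIndependent
  set W : Submodule ℝ (EuclideanSpace ℝ (Fin N)) := Submodule.span ℝ (Set.range v) with hW
  have hWrank : finrank ℝ W = S.card := by
    rw [hW, finrank_span_eq_card hli, Fintype.card_coe]
  have hsymm : LinearMap.IsSymmetric (Matrix.toEuclideanLin B) :=
    Matrix.isHermitian_iff_isSymmetric.1 hB
  have hBb : ∀ j, Matrix.toEuclideanLin B (b j) = hB.eigenvalues j • b j := by
    intro j
    apply (WithLp.equiv 2 (Fin N → ℝ)).injective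
    simpa using hB.mulVec_eigenvectorBasis j
  have hrepr : ∀ x : EuclideanSpace ℝ (Fin N), ∀ j,
      b.repr (Matrix.toEuclideanLin B x) j = hB.eigenvalues j * b.repr x j := by
    intro x j
    rw [b.repr_apply_apply, b.repr_apply_apply, ← hsymm (b j) x, hBb,
      real_inner_smul_left]
  have hdisj : Disjoint W K := by
    rw [Submodule.disjoint_def]
    intro x hxW hxK
    by_contra hx0
    have hcoef : ∀ j, j ∉ S → b.repr x j = 0 := by
      intro j hj
      have : (inner ℝ (b j) x : ℝ) = 0 := by
        refine Submodule.span_induction ?_ ?_ ?_ ?_ hxW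
        · rintro y ⟨⟨j', hj'⟩, rfl⟩
          exact b.orthonormal.2 (fun h => hj (h ▸ hj'))
        · simp
        · intro y z _ _ hy hz; rw [inner_add_right, hy, hz, add_zero]
        · intro a y _ hy; rw [inner_smul_right, hy, mul_zero]
      rwa [b.repr_apply_apply]
    have hinner : (inner ℝ x (Matrix.toEuclideanLin B x) : ℝ)
        = ∑ j, hB.eigenvalues j * (b.repr x j) ^ 2 := by
      rw [← b.repr.inner_map_map x (Matrix.toEuclideanLin B x), PiLp.inner_apply]
      refine Finset.sum_congr rfl fun j _ => ?_
      rw [hrepr]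
      simp [RCLike.inner_apply, conj_trivial]
      ring
    have hnorm : ‖x‖ ^ 2 = ∑ j, (b.repr x j) ^ 2 := by
      rw [← b.repr.norm_map x, EuclideanSpace.norm_eq, Real.sq_sqrt (by positivity)]
      simp [sq]
    have hex : ∃ j, b.repr x j ≠ 0 := by
      by_contra hall
      push_neg at hall
      exact hx0 (b.repr.map_eq_zero_iff.1 (by ext j; simpa using hall j))
    obtain ⟨j0, hj0⟩ := hex
    have hj0S : j0 ∈ S := by
      by_contra hj
      exact hj0 (hcoef _ hj)
    have hstrict : c * ‖x‖ ^ 2 < ∑ j, hB.eigenvalues j * (b.repr x j) ^ 2 := by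
      rw [hnorm, Finset.mul_sum]
      refine Finset.sum_lt_sum (fun j _ => ?_) ⟨j0, mem_univ _, ?_⟩
      · by_cases hj : j ∈ S
        · have : c < hB.eigenvalues j := by
            have := mem_filter.1 (hS ▸ hj); exact this.2
          nlinarith [sq_nonneg (b.repr x j)]
        · rw [hcoef j hj]; ring_nf; exact le_refl _
      · have h1 : c < hB.eigenvalues j0 := by
          have := mem_filter.1 (hS ▸ hj0S); exact this.2
        have h2 : (0:ℝ) < (b.repr x j0) ^ 2 := by positivity
        nlinarith
    exact absurd (hq x hxK) (not_le.2 (lt_of_lt_of_le hstrict (le_of_eq hinner.symm)))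
  have := Submodule.finrank_add_finrank_le_of_disjoint hdisj
  rw [hWrank] at this
  simpa [finrank_euclideanSpace] using this

lemma aux_specNorm_nonneg {m n : Type*} [Fintype m] [Fintype n] [DecidableEq n]
    (A : Matrix m n ℝ) : 0 ≤ specNorm A := norm_nonneg _

lemma aux_specNorm_bound {m n : Type*} [Fintype m] [Fintype n] [DecidableEq n]
    (F : Matrix m n ℝ) (w : EuclideanSpace ℝ n) :
    ‖Matrix.toEuclideanLin F w‖ ≤ specNorm F * ‖w‖ := by
  simpa [specNorm] using
    (LinearMap.toContinuousLinearMap (Matrix.toEuclideanLin F)).le_opNorm w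

lemma aux_hconcat_add {m n k : ℕ} (A E : Fin k → Matrix (Fin m) (Fin n) ℝ) :
    hconcat (fun j => A j + E j) = hconcat A + hconcat E := by
  ext i j; simp [hconcat]

/-- the `j`-th chunk of a long vector -/
noncomputable def chunk {n k : ℕ} (x : EuclideanSpace ℝ (Fin (k * n))) (j : Fin k) :
    EuclideanSpace ℝ (Fin n) :=
  (WithLp.equiv 2 (Fin n → ℝ)).symm fun l => x (finProdFinEquiv (j, l))

lemma aux_hconcat_toEuclideanLin {m n k : ℕ} (F : Fin k → Matrix (Fin m) (Fin n) ℝ)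
    (x : EuclideanSpace ℝ (Fin (k * n))) :
    Matrix.toEuclideanLin (hconcat F) x
      = ∑ j, Matrix.toEuclideanLin (F j) (chunk x j) := by
  apply (WithLp.equiv 2 (Fin m → ℝ)).injective
  funext i
  have hL : (WithLp.equiv 2 (Fin m → ℝ)) (Matrix.toEuclideanLin (hconcat F) x) i
      = ∑ j, ∑ l, F j i l * x (finProdFinEquiv (j, l)) := by
    rw [WithLp.equiv_apply, Matrix.ofLp_toEuclideanLin_apply]
    show (hconcat F *ᵥ (WithLp.equiv 2 _ x)) i = _
    simp only [mulVec, dotProduct]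
    rw [← finProdFinEquiv.sum_comp (fun p => hconcat F i p * (WithLp.equiv 2 _ x) p),
      Fintype.sum_prod_type]
    simp only [hconcat, Matrix.of_apply, Equiv.symm_apply_apply, WithLp.equiv_apply]
  have hR : (WithLp.equiv 2 (Fin m → ℝ)) (∑ j, Matrix.toEuclideanLin (F j) (chunk x j)) i
      = ∑ j, ∑ l, F j i l * x (finProdFinEquiv (j, l)) := by
    have : (WithLp.equiv 2 (Fin m → ℝ)) (∑ j, Matrix.toEuclideanLin (F j) (chunk x j))
        = ∑ j, (WithLp.equiv 2 (Fin m → ℝ)) (Matrix.toEuclideanLin (F j) (chunk x j)) := by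
      simp [WithLp.equiv_apply]
    rw [this, Finset.sum_apply]
    refine Finset.sum_congr rfl fun j _ => ?_
    rw [WithLp.equiv_apply, Matrix.ofLp_toEuclideanLin_apply]
    show (F j *ᵥ (WithLp.equiv 2 _ (chunk x j))) i = _
    simp only [mulVec, dotProduct, chunk, Equiv.apply_symm_apply, WithLp.equiv_apply,
      WithLp.equiv_symm_apply]
  rw [hL, hR]

lemma aux_sum_chunk_normsq {n k : ℕ} (x : EuclideanSpace ℝ (Fin (k * n))) :
    ∑ j, ‖chunk x j‖ ^ 2 = ‖x‖ ^ 2 := by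
  simp only [EuclideanSpace.norm_eq]
  have h : ∀ j, Real.sqrt (∑ l, ‖chunk x j l‖ ^ 2) ^ 2 = ∑ l, ‖chunk x j l‖ ^ 2 :=
    fun j => Real.sq_sqrt (by positivity)
  rw [Real.sq_sqrt (by positivity)]
  simp only [h]
  rw [← finProdFinEquiv.sum_comp (fun p => ‖x p‖ ^ 2), Fintype.sum_prod_type]
  rfl

lemma aux_quad_eq {p q : ℕ} (M : Matrix (Fin p) (Fin q) ℝ) (x : EuclideanSpace ℝ (Fin q)) :
    (inner ℝ x (Matrix.toEuclideanLin (Mᵀ * M) x) : ℝ)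
      = ‖Matrix.toEuclideanLin M x‖ ^ 2 := by
  rw [← real_inner_self_eq_norm_sq, PiLp.inner_apply, PiLp.inner_apply]
  simp only [Matrix.toEuclideanLin_apply, WithLp.equiv_symm_apply, WithLp.equiv_apply,
    RCLike.inner_apply, conj_trivial]
  show ((Mᵀ * M) *ᵥ (WithLp.equiv 2 _ x)) ⬝ᵥ (WithLp.equiv 2 _ x)
      = (M *ᵥ (WithLp.equiv 2 _ x)) ⬝ᵥ (M *ᵥ (WithLp.equiv 2 _ x))
  rw [dotProduct_comm, ← Matrix.mulVec_mulVec, Matrix.dotProduct_mulVec, Matrix.vecMul_transpose]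

lemma aux_rank_toEuclidean {p q : ℕ} (M : Matrix (Fin p) (Fin q) ℝ) :
    M.rank + finrank ℝ (LinearMap.ker (Matrix.toEuclideanLin M)) = q := by
  have h := (Matrix.toEuclideanLin M).finrank_range_add_finrank_ker
  rw [Matrix.rank_eq_finrank_range_toLin M (PiLp.basisFun 2 ℝ (Fin p))
    (PiLp.basisFun 2 ℝ (Fin q)), ← Matrix.toEuclideanLin_eq_toLin]
  rw [h]
  simp [finrank_euclideanSpace]

end Aux

theorem stmt8 {m n k : ℕ} (A E : Fin k → Matrix (Fin m) (Fin n) ℝ)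
    (i : ℕ) (hi : (hconcat A).rank ≤ i) (hi2 : i < min m (k * n)) :
    sval (hconcat fun j => A j + E j) i
      ≤ Real.sqrt (∑ j, (2 * specNorm (A j) * specNorm (E j) + specNorm (E j) ^ 2)) := by
  have hiN : i < k * n := lt_of_lt_of_le hi2 (min_le_right _ _)
  set Mt := hconcat (fun j => A j + E j) with hMt
  set B := Mtᵀ * Mt with hBdef
  have hB : B.IsHermitian := Matrix.isHermitian_conjTranspose_mul_self Mt
  set c := ∑ j, (2 * specNorm (A j) * specNorm (E j) + specNorm (E j) ^ 2) with hc
  set s := ∑ j, specNorm (E j) ^ 2 with hs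
  have hsc : s ≤ c := by
    refine Finset.sum_le_sum fun j _ => ?_
    nlinarith [aux_specNorm_nonneg (A j), aux_specNorm_nonneg (E j)]
  set K := LinearMap.ker (Matrix.toEuclideanLin (hconcat A)) with hK
  have hq : ∀ x ∈ K, (inner ℝ x (Matrix.toEuclideanLin B x) : ℝ) ≤ c * ‖x‖ ^ 2 := by
    intro x hx
    rw [hBdef, aux_quad_eq]
    have hx0 : Matrix.toEuclideanLin (hconcat A) x = 0 := LinearMap.mem_ker.1 hx
    have hM : Matrix.toEuclideanLin Mt x = ∑ j, Matrix.toEuclideanLin (E j) (chunk x j) := by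
      rw [hMt, aux_hconcat_add, map_add, LinearMap.add_apply, hx0, zero_add,
        aux_hconcat_toEuclideanLin]
    rw [hM]
    have h1 : ‖∑ j, Matrix.toEuclideanLin (E j) (chunk x j)‖
        ≤ ∑ j, specNorm (E j) * ‖chunk x j‖ := by
      refine le_trans (norm_sum_le _ _) (Finset.sum_le_sum fun j _ => ?_)
      exact aux_specNorm_bound _ _
    calc ‖∑ j, Matrix.toEuclideanLin (E j) (chunk x j)‖ ^ 2
        ≤ (∑ j, specNorm (E j) * ‖chunk x j‖) ^ 2 := by
          apply pow_le_pow_left₀ (norm_nonneg _) h1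
      _ ≤ (∑ j, specNorm (E j) ^ 2) * (∑ j, ‖chunk x j‖ ^ 2) :=
          Finset.sum_mul_sq_le_sq_mul_sq _ _ _
      _ = s * ‖x‖ ^ 2 := by rw [aux_sum_chunk_normsq, hs]
      _ ≤ c * ‖x‖ ^ 2 := mul_le_mul_of_nonneg_right hsc (by positivity)
  have hcount := aux_count_eigen hB K hq
  have hrank : (hconcat A).rank + Module.finrank ℝ K = k * n := aux_rank_toEuclidean (hconcat A)
  have hcard : (univ.filter fun j => c < hB.eigenvalues j).card ≤ i := by omega
  rw [sval, dif_pos hiN]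
  apply Real.sqrt_le_sqrt
  rw [eigDesc, dif_pos hB]
  exact aux_sorted_le_of_count_le _ c hiN hcard
end

section
/- Let A ∈ ℝ^{m×n} have rank r, and let M̃ = [A, A+E₂, …, A+E_k] be the concatenation of A with k−1 perturbed copies. Then for i = 1,…,r, |σ_i(M̃) − √k·σ_i(A)| ≤ (1/(√k·σ_i(A))) · Σ_{j=2}^k (2‖A‖₂‖E_j‖₂ + ‖E_j‖₂²). -/
open Matrix Finset

open scoped RealInnerProductSpace

section CF

variable {N r : ℕ}

local notation "E" N => EuclideanSpace ℝ (Fin N)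

lemma rayleigh_lower (T : (E N) →ₗ[ℝ] (E N)) (w : Fin r → E N)
    (hw : Orthonormal ℝ w) (e : Fin r → ℝ) (hTw : ∀ t, T (w t) = e t • w t)
    (c : ℝ) (hc : ∀ t, c ≤ e t) :
    ∀ x ∈ Submodule.span ℝ (Set.range w), c * ‖x‖ ^ 2 ≤ ⟪T x, x⟫ := by
  intro x hx
  obtain ⟨a, rfl⟩ := (Submodule.mem_span_range_iff_exists_fun ℝ).mp hx
  have horth := orthonormal_iff_ite.mp hw
  have hx2 : ‖(∑ t, a t • w t : E N)‖ ^ 2 = ∑ t, (a t) ^ 2 := by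
    rw [← real_inner_self_eq_norm_sq]
    simp only [sum_inner, inner_sum, real_inner_smul_left, real_inner_smul_right, horth]
    simp [Finset.mul_sum, mul_ite, pow_two]
  have hT1 : T (∑ t, a t • w t) = ∑ t, (a t * e t) • w t := by
    rw [map_sum]
    exact Finset.sum_congr rfl fun t _ => by
      rw [_root_.map_smul, hTw t, smul_smul]
  have hTx : ⟪T (∑ t, a t • w t), (∑ t, a t • w t)⟫ = ∑ t, e t * (a t) ^ 2 := by
    rw [hT1]
    simp only [sum_inner, inner_sum, real_inner_smul_left, real_inner_smul_right, horth]
    simp [Finset.mul_sum, mul_ite, pow_two]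
    exact Finset.sum_congr rfl fun t _ => by ring
  rw [hx2, hTx, Finset.mul_sum]
  exact Finset.sum_le_sum fun t _ => mul_le_mul_of_nonneg_right (hc t) (sq_nonneg _)

lemma rayleigh_upper (T : (E N) →ₗ[ℝ] (E N)) (w : Fin r → E N)
    (hw : Orthonormal ℝ w) (e : Fin r → ℝ) (hTw : ∀ t, T (w t) = e t • w t)
    (c : ℝ) (hc : ∀ t, e t ≤ c) :
    ∀ x ∈ Submodule.span ℝ (Set.range w), ⟪T x, x⟫ ≤ c * ‖x‖ ^ 2 := by
  intro x hx
  have := rayleigh_lower (-T) w hw (fun t => -e t) (fun t => by simp [hTw t]) (-c)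
    (fun t => neg_le_neg (hc t)) x hx
  simp only [LinearMap.neg_apply, inner_neg_left, neg_mul] at this
  linarith


/-- The top subspace: span of the first `i+1` eigenvectors (descending order). -/
lemma cf_lower (T : (E N) →ₗ[ℝ] (E N)) (v : Fin N → E N)
    (hv : Orthonormal ℝ v) (d : Fin N → ℝ) (hTv : ∀ j, T (v j) = d j • v j)
    (hd : Antitone d) (i : Fin N) :
    ∃ V : Submodule ℝ (E N), (i + 1 : ℕ) ≤ Module.finrank ℝ V ∧
      ∀ x ∈ V, d i * ‖x‖ ^ 2 ≤ ⟪T x, x⟫ := by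
  have hle : (i : ℕ) + 1 ≤ N := i.2
  set f : Fin (i + 1 : ℕ) → Fin N := fun t => ⟨t.1, by omega⟩ with hf
  have hfinj : Function.Injective f := fun a b h => by
    apply Fin.ext; simpa [hf, Fin.ext_iff] using h
  refine ⟨Submodule.span ℝ (Set.range (v ∘ f)), ?_, ?_⟩
  · rw [finrank_span_eq_card ((hv.comp f hfinj).linearIndependent)]
    simp
  · refine rayleigh_lower T (v ∘ f) (hv.comp f hfinj) (d ∘ f)
      (fun t => hTv (f t)) (d i) (fun t => hd ?_)
    simpa [hf, Fin.le_def] using Nat.lt_succ_iff.mp t.2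

lemma cf_upper (T : (E N) →ₗ[ℝ] (E N)) (v : Fin N → E N)
    (hv : Orthonormal ℝ v) (d : Fin N → ℝ) (hTv : ∀ j, T (v j) = d j • v j)
    (hd : Antitone d) (i : Fin N) (V : Submodule ℝ (E N))
    (hV : (i + 1 : ℕ) ≤ Module.finrank ℝ V) :
    ∃ x ∈ V, x ≠ 0 ∧ ⟪T x, x⟫ ≤ d i * ‖x‖ ^ 2 := by
  have hle : (i : ℕ) + 1 ≤ N := i.2
  set f : Fin (N - i) → Fin N := fun t => ⟨i.1 + t.1, by omega⟩ with hf
  have hfinj : Function.Injective f := fun a b h => by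
    apply Fin.ext
    have := Fin.ext_iff.mp h
    simp only [hf] at this; omega
  set W := Submodule.span ℝ (Set.range (v ∘ f)) with hW
  have hWrank : Module.finrank ℝ W = N - i := by
    rw [hW, finrank_span_eq_card ((hv.comp f hfinj).linearIndependent)]
    simp
  have hEV : Module.finrank ℝ (E N) = N := by simp
  have hne : V ⊓ W ≠ ⊥ := by
    intro hbot
    have h1 := Submodule.finrank_sup_add_finrank_inf_eq V W
    rw [hbot] at h1
    have h2 : Module.finrank ℝ ↥(V ⊔ W) ≤ N := le_of_le_of_eq (Submodule.finrank_le _) hEV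
    simp only [finrank_bot, add_zero] at h1
    omega
  obtain ⟨x, hxmem, hx0⟩ := Submodule.ne_bot_iff _ |>.mp hne
  refine ⟨x, hxmem.1, hx0, ?_⟩
  refine rayleigh_upper T (v ∘ f) (hv.comp f hfinj) (d ∘ f)
    (fun t => hTv (f t)) (d i) (fun t => hd ?_) x hxmem.2
  simp [hf, Fin.le_def]

/-- If a subspace of dimension `≥ i+1` has Rayleigh quotient `≥ c`, then `c ≤ d i`. -/
lemma le_eig_of_subspace (T : (E N) →ₗ[ℝ] (E N)) (v : Fin N → E N)
    (hv : Orthonormal ℝ v) (d : Fin N → ℝ) (hTv : ∀ j, T (v j) = d j • v j)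
    (hd : Antitone d) (i : Fin N) (V : Submodule ℝ (E N))
    (hV : (i + 1 : ℕ) ≤ Module.finrank ℝ V) (c : ℝ)
    (hc : ∀ x ∈ V, c * ‖x‖ ^ 2 ≤ ⟪T x, x⟫) : c ≤ d i := by
  obtain ⟨x, hxV, hx0, hup⟩ := cf_upper T v hv d hTv hd i V hV
  have h1 := hc x hxV
  have hxn : 0 < ‖x‖ := norm_pos_iff.mpr hx0
  have hx2 : 0 < ‖x‖ ^ 2 := by positivity
  nlinarith

/-- Abstract Weyl-type comparison. -/
lemma eig_le_eig_add (T T' : (E N) →ₗ[ℝ] (E N)) (v v' : Fin N → E N)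
    (hv : Orthonormal ℝ v) (hv' : Orthonormal ℝ v') (d d' : Fin N → ℝ)
    (hTv : ∀ j, T (v j) = d j • v j) (hTv' : ∀ j, T' (v' j) = d' j • v' j)
    (hd : Antitone d) (hd' : Antitone d') (c : ℝ)
    (hc : ∀ x, ⟪T x, x⟫ - ⟪T' x, x⟫ ≤ c * ‖x‖ ^ 2) (i : Fin N) :
    d i ≤ d' i + c := by
  obtain ⟨V, hVrank, hVlow⟩ := cf_lower T v hv d hTv hd i
  have : ∀ x ∈ V, (d i - c) * ‖x‖ ^ 2 ≤ ⟪T' x, x⟫ := by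
    intro x hx
    have h1 := hVlow x hx
    have h2 := hc x
    nlinarith
  have := le_eig_of_subspace T' v' hv' d' hTv' hd' i V hVrank (d i - c) this
  linarith
end CF


section MatrixLevel
variable {p q : ℕ}

lemma toEuclideanLin_mul_apply (X : Matrix (Fin p) (Fin q) ℝ) {s : ℕ}
    (Y : Matrix (Fin q) (Fin s) ℝ) (x : EuclideanSpace ℝ (Fin s)) :
    Matrix.toEuclideanLin (X * Y) x = Matrix.toEuclideanLin X (Matrix.toEuclideanLin Y x) := by
  simp [Matrix.toEuclideanLin_apply, Matrix.mulVec_mulVec]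

lemma inner_toEuclideanLin_transpose (X : Matrix (Fin p) (Fin q) ℝ)
    (y : EuclideanSpace ℝ (Fin p)) (x : EuclideanSpace ℝ (Fin q)) :
    ⟪Matrix.toEuclideanLin Xᵀ y, x⟫ = ⟪y, Matrix.toEuclideanLin X x⟫ := by
  simp only [Matrix.toEuclideanLin_apply, PiLp.inner_apply, RCLike.inner_apply, starRingEnd_apply]
  simp only [PiLp.toLp_apply, Matrix.mulVec, dotProduct, transpose_apply,
    star_trivial]
  simp only [Finset.sum_mul, Finset.mul_sum]
  rw [Finset.sum_comm]
  refine Finset.sum_congr rfl fun a _ => Finset.sum_congr rfl fun b _ => ?_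
  ring

lemma norm_toEuclideanLin_apply_le (X : Matrix (Fin p) (Fin q) ℝ)
    (x : EuclideanSpace ℝ (Fin q)) :
    ‖Matrix.toEuclideanLin X x‖ ≤ specNorm X * ‖x‖ := by
  have := (LinearMap.toContinuousLinearMap (Matrix.toEuclideanLin X)).le_opNorm x
  simpa [specNorm] using this

lemma specNorm_nonneg (X : Matrix (Fin p) (Fin q) ℝ) : 0 ≤ specNorm X := norm_nonneg _

end MatrixLevel

section Eig
variable {N : ℕ} {S : Matrix (Fin N) (Fin N) ℝ}

lemma eigDesc_eq (hS : S.IsHermitian) (j : Fin N) :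
    eigDesc S j = hS.eigenvalues (Tuple.sort hS.eigenvalues j.rev) := by
  simp only [eigDesc, dif_pos hS]

lemma eigDesc_antitone (hS : S.IsHermitian) : Antitone (eigDesc S) := by
  intro a b hab
  rw [eigDesc_eq hS, eigDesc_eq hS]
  exact Tuple.monotone_sort hS.eigenvalues (Fin.rev_le_rev.mpr hab)

lemma eigDesc_isEigSys (hS : S.IsHermitian) :
    ∃ v : Fin N → EuclideanSpace ℝ (Fin N), Orthonormal ℝ v ∧
      ∀ j, Matrix.toEuclideanLin S (v j) = eigDesc S j • v j := by
  set g : Fin N → Fin N := fun j => Tuple.sort hS.eigenvalues j.rev with hg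
  have hginj : Function.Injective g :=
    (Tuple.sort hS.eigenvalues).injective.comp Fin.rev_injective
  refine ⟨fun j => hS.eigenvectorBasis (g j),
    hS.eigenvectorBasis.orthonormal.comp g hginj, fun j => ?_⟩
  rw [eigDesc_eq hS]
  have h := hS.mulVec_eigenvectorBasis (g j)
  apply (WithLp.equiv 2 (Fin N → ℝ)).injective
  ext a
  have := congrFun h a
  simpa [Matrix.toEuclideanLin_apply] using this
end Eig
section EigFacts
variable {N : ℕ} {S T : Matrix (Fin N) (Fin N) ℝ}

/-- Uniqueness: `eigDesc` equals any antitone eigensystem. -/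
lemma eigDesc_eq_of_sys (hS : S.IsHermitian) (v : Fin N → EuclideanSpace ℝ (Fin N))
    (hv : Orthonormal ℝ v) (d : Fin N → ℝ)
    (hTv : ∀ j, Matrix.toEuclideanLin S (v j) = d j • v j) (hd : Antitone d) (j : Fin N) :
    eigDesc S j = d j := by
  obtain ⟨v0, hv0, hTv0⟩ := eigDesc_isEigSys hS
  have h1 := eig_le_eig_add (Matrix.toEuclideanLin S) (Matrix.toEuclideanLin S) v0 v hv0 hv
    (eigDesc S) d hTv0 hTv (eigDesc_antitone hS) hd 0 (fun x => by simp) j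
  have h2 := eig_le_eig_add (Matrix.toEuclideanLin S) (Matrix.toEuclideanLin S) v v0 hv hv0
    d (eigDesc S) hTv hTv0 hd (eigDesc_antitone hS) 0 (fun x => by simp) j
  linarith

/-- Weyl's perturbation inequality. -/
lemma weyl (hS : S.IsHermitian) (hT : T.IsHermitian) (j : Fin N) :
    |eigDesc S j - eigDesc T j| ≤ specNorm (S - T) := by
  obtain ⟨v, hv, hTv⟩ := eigDesc_isEigSys hS
  obtain ⟨w, hw, hTw⟩ := eigDesc_isEigSys hT
  have key : ∀ (x : EuclideanSpace ℝ (Fin N)),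
      |⟪Matrix.toEuclideanLin S x, x⟫ - ⟪Matrix.toEuclideanLin T x, x⟫| ≤
        specNorm (S - T) * ‖x‖ ^ 2 := by
    intro x
    have h1 : ⟪Matrix.toEuclideanLin S x, x⟫ - ⟪Matrix.toEuclideanLin T x, x⟫
        = ⟪Matrix.toEuclideanLin (S - T) x, x⟫ := by
      rw [map_sub]
      simp [inner_sub_left]
    rw [h1]
    calc |⟪Matrix.toEuclideanLin (S - T) x, x⟫|
        ≤ ‖Matrix.toEuclideanLin (S - T) x‖ * ‖x‖ := abs_real_inner_le_norm _ _
      _ ≤ specNorm (S - T) * ‖x‖ * ‖x‖ :=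
          mul_le_mul_of_nonneg_right (norm_toEuclideanLin_apply_le _ _) (norm_nonneg _)
      _ = specNorm (S - T) * ‖x‖ ^ 2 := by ring
  have h1 := eig_le_eig_add (Matrix.toEuclideanLin S) (Matrix.toEuclideanLin T) v w hv hw
    (eigDesc S) (eigDesc T) hTv hTw (eigDesc_antitone hS) (eigDesc_antitone hT)
    (specNorm (S - T)) (fun x => (abs_le.mp (key x)).2) j
  have h2 := eig_le_eig_add (Matrix.toEuclideanLin T) (Matrix.toEuclideanLin S) w v hw hv
    (eigDesc T) (eigDesc S) hTw hTv (eigDesc_antitone hT) (eigDesc_antitone hS)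
    (specNorm (S - T)) (fun x => by have := (abs_le.mp (key x)).1; linarith) j
  rw [abs_le]
  constructor <;> linarith

lemma eigDesc_nonneg (hS : S.PosSemidef) (j : Fin N) : 0 ≤ eigDesc S j := by
  rw [eigDesc_eq hS.isHermitian]
  exact hS.eigenvalues_nonneg _

lemma eigDesc_smul (hS : S.IsHermitian) (c : ℝ) (hc : 0 ≤ c) (j : Fin N) :
    eigDesc (c • S) j = c * eigDesc S j := by
  obtain ⟨v, hv, hTv⟩ := eigDesc_isEigSys hS
  have hcS : (c • S).IsHermitian := by unfold Matrix.IsHermitian at *; rw [Matrix.conjTranspose_smul, hS]; simp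
  refine eigDesc_eq_of_sys hcS v hv (fun j => c * eigDesc S j) (fun j => ?_) ?_ j
  · rw [_root_.map_smul]
    simp only [LinearMap.smul_apply, hTv j]
    rw [smul_smul]
  · intro a b hab
    exact mul_le_mul_of_nonneg_left (eigDesc_antitone hS hab) hc

end EigFacts
section Dual
variable {p q : ℕ}

lemma transpose_eq_conjTranspose (B : Matrix (Fin p) (Fin q) ℝ) : Bᵀ = Bᴴ :=
  (Matrix.conjTranspose_eq_transpose_of_trivial B).symm

lemma posSemidef_tmul (B : Matrix (Fin p) (Fin q) ℝ) : (Bᵀ * B).PosSemidef := by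
  rw [transpose_eq_conjTranspose]
  exact Matrix.posSemidef_conjTranspose_mul_self B

lemma isHermitian_tmul (B : Matrix (Fin p) (Fin q) ℝ) : (Bᵀ * B).IsHermitian :=
  (posSemidef_tmul B).isHermitian

lemma inner_tmul (B : Matrix (Fin p) (Fin q) ℝ) (x : EuclideanSpace ℝ (Fin q)) :
    ⟪Matrix.toEuclideanLin (Bᵀ * B) x, x⟫ = ‖Matrix.toEuclideanLin B x‖ ^ 2 := by
  rw [toEuclideanLin_mul_apply, inner_toEuclideanLin_transpose, real_inner_comm,
    real_inner_self_eq_norm_sq]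

set_option maxHeartbeats 1000000 in
lemma eig_dual_le (B : Matrix (Fin p) (Fin q) ℝ) (i : ℕ) (hp : i < p) (hq : i < q) :
    eigDesc (Bᵀ * B) ⟨i, hq⟩ ≤ eigDesc (B * Bᵀ) ⟨i, hp⟩ := by
  have hBBt : (B * Bᵀ).PosSemidef := by
    have := posSemidef_tmul Bᵀ
    rwa [Matrix.transpose_transpose] at this
  set c := eigDesc (Bᵀ * B) ⟨i, hq⟩ with hc
  rcases le_or_gt c 0 with h | h
  · exact h.trans (eigDesc_nonneg hBBt _)
  obtain ⟨v, hv, hTv⟩ := eigDesc_isEigSys (isHermitian_tmul B)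
  obtain ⟨V, hVrank, hVlow⟩ := cf_lower _ v hv _ hTv (eigDesc_antitone (isHermitian_tmul B))
    ⟨i, hq⟩
  -- the image of V under B
  set φ := (Matrix.toEuclideanLin B).domRestrict V with hφ
  have hVlow' : ∀ x ∈ V, c * ‖x‖ ^ 2 ≤ ‖Matrix.toEuclideanLin B x‖ ^ 2 := by
    intro x hx
    have := hVlow x hx
    rwa [inner_tmul] at this
  have hφinj : Function.Injective φ := by
    rw [← LinearMap.ker_eq_bot]
    rw [Submodule.eq_bot_iff]
    rintro ⟨x, hxV⟩ hx
    have hx0 : Matrix.toEuclideanLin B x = 0 := by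
      simpa [hφ, LinearMap.mem_ker] using hx
    have h1 := hVlow' x hxV
    rw [hx0] at h1
    simp only [norm_zero] at h1
    have : ‖x‖ ^ 2 ≤ 0 := by nlinarith
    have : x = 0 := by
      have := sq_nonneg ‖x‖
      have hn : ‖x‖ = 0 := by nlinarith
      simpa using hn
    simp [this]
  have hWrank : (i + 1 : ℕ) ≤ Module.finrank ℝ (LinearMap.range φ) := by
    rw [LinearMap.finrank_range_of_inj hφinj]
    exact hVrank
  obtain ⟨w, hw, hTw⟩ := eigDesc_isEigSys hBBt.isHermitian
  refine le_eig_of_subspace _ w hw _ hTw (eigDesc_antitone hBBt.isHermitian) ⟨i, hp⟩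
    (LinearMap.range φ) hWrank c ?_
  rintro y hy
  obtain ⟨⟨x, hxV⟩, rfl⟩ := hy
  have hyx : φ ⟨x, hxV⟩ = Matrix.toEuclideanLin B x := rfl
  rw [hyx]
  have hBtB : Matrix.toEuclideanLin (B * Bᵀ) (Matrix.toEuclideanLin B x)
      = Matrix.toEuclideanLin B (Matrix.toEuclideanLin (Bᵀ * B) x) := by
    simp only [toEuclideanLin_mul_apply]
  rcases eq_or_ne x 0 with rfl | hx0
  · simp
  have hxn : 0 < ‖x‖ := norm_pos_iff.mpr hx0
  have hCS : ⟪Matrix.toEuclideanLin (Bᵀ * B) x, x⟫ ≤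
      ‖Matrix.toEuclideanLin (Bᵀ * B) x‖ * ‖x‖ := real_inner_le_norm _ _
  rw [inner_tmul] at hCS
  have hlow := hVlow' x hxV
  -- ⟪B Bᵀ (Bx), Bx⟫ = ‖Bᵀ (B x)‖ ^ 2  =  ‖(Bᵀ*B) x‖ ^ 2  (as maps)
  have hinner : ⟪Matrix.toEuclideanLin (B * Bᵀ) (Matrix.toEuclideanLin B x),
      Matrix.toEuclideanLin B x⟫ = ‖Matrix.toEuclideanLin (Bᵀ * B) x‖ ^ 2 := by
    rw [hBtB, real_inner_comm, ← inner_toEuclideanLin_transpose, ← toEuclideanLin_mul_apply,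
      real_inner_self_eq_norm_sq]
  rw [hinner]
  set a := ‖Matrix.toEuclideanLin B x‖ with ha
  set b := ‖Matrix.toEuclideanLin (Bᵀ * B) x‖ with hb
  have hb0 : 0 ≤ b := norm_nonneg _
  have ha0 : 0 ≤ a := norm_nonneg _
  have h4 : a ^ 2 * a ^ 2 ≤ (b * ‖x‖) * (b * ‖x‖) :=
    mul_le_mul hCS hCS (sq_nonneg _) (by positivity)
  have h5 : c * ‖x‖ ^ 2 * a ^ 2 ≤ a ^ 2 * a ^ 2 :=
    mul_le_mul_of_nonneg_right hlow (sq_nonneg _)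
  have h6 : c * a ^ 2 * ‖x‖ ^ 2 ≤ b ^ 2 * ‖x‖ ^ 2 := by nlinarith
  exact le_of_mul_le_mul_right h6 (by positivity)

lemma eig_dual (B : Matrix (Fin p) (Fin q) ℝ) (i : ℕ) (hp : i < p) (hq : i < q) :
    eigDesc (Bᵀ * B) ⟨i, hq⟩ = eigDesc (B * Bᵀ) ⟨i, hp⟩ := by
  refine le_antisymm (eig_dual_le B i hp hq) ?_
  have := eig_dual_le Bᵀ i hq hp
  rwa [Matrix.transpose_transpose] at this

end Dual
section SpecNorm
variable {p q s : ℕ}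

lemma specNorm_mul_le (X : Matrix (Fin p) (Fin q) ℝ) (Y : Matrix (Fin q) (Fin s) ℝ) :
    specNorm (X * Y) ≤ specNorm X * specNorm Y := by
  have h : LinearMap.toContinuousLinearMap (Matrix.toEuclideanLin (X * Y)) =
      (LinearMap.toContinuousLinearMap (Matrix.toEuclideanLin X)).comp
        (LinearMap.toContinuousLinearMap (Matrix.toEuclideanLin Y)) := by
    ext x
    have := toEuclideanLin_mul_apply X Y x
    simp only [ContinuousLinearMap.coe_comp', Function.comp_apply,
      LinearMap.coe_toContinuousLinearMap']
    rw [this]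
  rw [specNorm, h]
  exact ContinuousLinearMap.opNorm_comp_le _ _

lemma specNorm_add_le (X Y : Matrix (Fin p) (Fin q) ℝ) :
    specNorm (X + Y) ≤ specNorm X + specNorm Y := by
  have h : LinearMap.toContinuousLinearMap (Matrix.toEuclideanLin (X + Y)) =
      LinearMap.toContinuousLinearMap (Matrix.toEuclideanLin X) +
        LinearMap.toContinuousLinearMap (Matrix.toEuclideanLin Y) := by
    ext x
    simp [map_add]
  rw [specNorm, h]
  exact norm_add_le _ _

lemma specNorm_zero : specNorm (0 : Matrix (Fin p) (Fin q) ℝ) = 0 := by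
  have h : LinearMap.toContinuousLinearMap (Matrix.toEuclideanLin (0 : Matrix (Fin p) (Fin q) ℝ))
      = 0 := by ext x; simp
  rw [specNorm, h, norm_zero]

lemma specNorm_sum_le {ι : Type*} (t : Finset ι) (f : ι → Matrix (Fin p) (Fin q) ℝ) :
    specNorm (∑ j ∈ t, f j) ≤ ∑ j ∈ t, specNorm (f j) := by
  classical
  induction t using Finset.induction_on with
  | empty => simp [specNorm_zero]
  | insert _ _ hj ih =>
    rename_i a t'
    rw [Finset.sum_insert hj, Finset.sum_insert hj]
    exact (specNorm_add_le _ _).trans (by linarith)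

lemma specNorm_transpose (X : Matrix (Fin p) (Fin q) ℝ) : specNorm Xᵀ = specNorm X := by
  have key : ∀ (p q : ℕ) (X : Matrix (Fin p) (Fin q) ℝ), specNorm Xᵀ ≤ specNorm X := by
    intro p q X
    rw [specNorm]
    refine ContinuousLinearMap.opNorm_le_bound _ (specNorm_nonneg X) fun y => ?_
    simp only [LinearMap.coe_toContinuousLinearMap']
    set z := Matrix.toEuclideanLin Xᵀ y with hz
    rcases eq_or_lt_of_le (norm_nonneg z) with h0 | h0
    · rw [← h0]; exact mul_nonneg (specNorm_nonneg X) (norm_nonneg y)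
    have h1 : ‖z‖ ^ 2 = ⟪z, z⟫ := (real_inner_self_eq_norm_sq z).symm
    have h2 : ⟪z, z⟫ = ⟪y, Matrix.toEuclideanLin X z⟫ := by
      nth_rewrite 1 [hz]
      rw [inner_toEuclideanLin_transpose]
    have h3 : ⟪y, Matrix.toEuclideanLin X z⟫ ≤ ‖y‖ * ‖Matrix.toEuclideanLin X z‖ :=
      real_inner_le_norm _ _
    have h4 : ‖Matrix.toEuclideanLin X z‖ ≤ specNorm X * ‖z‖ :=
      norm_toEuclideanLin_apply_le _ _
    have h5 : ‖z‖ * ‖z‖ ≤ specNorm X * ‖y‖ * ‖z‖ := by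
      nlinarith [norm_nonneg y]
    exact le_of_mul_le_mul_right h5 h0
  refine le_antisymm (key _ _ X) ?_
  have := key _ _ Xᵀ
  rwa [Matrix.transpose_transpose] at this

end SpecNorm
section RankPos
variable {p q : ℕ}

lemma eigDesc_pos (A : Matrix (Fin p) (Fin q) ℝ) (i : ℕ) (hi : i < A.rank) (hq : i < q) :
    0 < eigDesc (Aᵀ * A) ⟨i, hq⟩ := by
  set hH := isHermitian_tmul A
  have hpsd := posSemidef_tmul A
  by_contra hcon
  push_neg at hcon
  have h0 : eigDesc (Aᵀ * A) ⟨i, hq⟩ = 0 :=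
    le_antisymm hcon (eigDesc_nonneg hpsd _)
  -- relate rank to number of nonzero eigenvalues
  have hrank : A.rank = Fintype.card {j // hH.eigenvalues j ≠ 0} := by
    rw [← Matrix.rank_transpose_mul_self A]
    exact hH.rank_eq_card_non_zero_eigs
  set e : Fin q ≃ Fin q := (Fin.revPerm).trans (Tuple.sort hH.eigenvalues) with he
  have hde : ∀ j, eigDesc (Aᵀ * A) j = hH.eigenvalues (e j) := fun j => by
    rw [eigDesc_eq hH]; rfl
  have hcard : Fintype.card {j // hH.eigenvalues j ≠ 0}
      = Fintype.card {j // eigDesc (Aᵀ * A) j ≠ 0} := by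
    refine Fintype.card_congr (Equiv.symm ?_)
    exact Equiv.subtypeEquiv e (fun j => by rw [hde j])
  have hsmall : Fintype.card {j : Fin q // eigDesc (Aᵀ * A) j ≠ 0} ≤ i := by
    have hinj : Function.Injective
        (fun x : {j : Fin q // eigDesc (Aᵀ * A) j ≠ 0} =>
          (⟨x.1.1, by
            by_contra hge
            push_neg at hge
            have hle : (⟨i, hq⟩ : Fin q) ≤ x.1 := by
              simpa [Fin.le_def] using hge
            have := eigDesc_antitone hH hle
            rw [h0] at this
            exact x.2 (le_antisymm this (eigDesc_nonneg hpsd _))⟩ : Fin i)) := by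
      rintro ⟨⟨a, ha⟩, hx⟩ ⟨⟨b, hb⟩, hy⟩ hab
      simp only [Fin.mk.injEq] at hab
      simp [Subtype.ext_iff, Fin.ext_iff, hab]
    have := Fintype.card_le_of_injective _ hinj
    simpa using this
  omega

end RankPos

section Hconcat
variable {m n k : ℕ}

lemma hconcat_mul_transpose (B C : Fin k → Matrix (Fin m) (Fin n) ℝ) :
    hconcat B * (hconcat C)ᵀ = ∑ j, B j * (C j)ᵀ := by
  ext a b
  simp only [Matrix.mul_apply, Matrix.transpose_apply, hconcat, Matrix.of_apply,
    Finset.sum_apply, Matrix.sum_apply]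
  rw [← finProdFinEquiv.sum_comp (ι := (Fin k × Fin n))]
  rw [Fintype.sum_prod_type]
  refine Finset.sum_congr rfl fun j _ => Finset.sum_congr rfl fun t _ => by simp

end Hconcat

theorem stmt10 {m n k : ℕ} (hk : 2 ≤ k) (A : Matrix (Fin m) (Fin n) ℝ)
    (E : Fin k → Matrix (Fin m) (Fin n) ℝ) (hE0 : E ⟨0, by omega⟩ = 0)
    (i : ℕ) (hi : i < A.rank) :
    |sval (hconcat fun j => A + E j) i - Real.sqrt k * sval A i|
      ≤ (1 / (Real.sqrt k * sval A i))
          * ∑ j ∈ Finset.univ.erase (⟨0, by omega⟩ : Fin k),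
              (2 * specNorm A * specNorm (E j) + specNorm (E j) ^ 2) := by
  have hn : i < n := lt_of_lt_of_le hi (Matrix.rank_le_width A)
  have hm : i < m := lt_of_lt_of_le hi (Matrix.rank_le_height A)
  have hkn : i < k * n := by
    have : n ≤ k * n := Nat.le_mul_of_pos_left n (by omega)
    omega
  set M := hconcat (fun j => A + E j) with hM
  set lam := eigDesc (Aᵀ * A) ⟨i, hn⟩ with hlam
  set mu := eigDesc (Mᵀ * M) ⟨i, hkn⟩ with hmu
  have hlampos : 0 < lam := eigDesc_pos A i hi hn
  have hmunonneg : 0 ≤ mu := eigDesc_nonneg (posSemidef_tmul M) _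
  set P : Fin k → Matrix (Fin m) (Fin m) ℝ :=
    fun j => A * (E j)ᵀ + (E j * Aᵀ + E j * (E j)ᵀ) with hP
  -- decomposition of M * Mᵀ
  have hMMt : M * Mᵀ = (k : ℝ) • (A * Aᵀ) + ∑ j, P j := by
    rw [hM, hconcat_mul_transpose]
    have hexp : ∀ j : Fin k, (A + E j) * (A + E j)ᵀ = A * Aᵀ + P j := by
      intro j
      rw [Matrix.transpose_add, Matrix.add_mul, Matrix.mul_add, Matrix.mul_add, hP]
      abel
    rw [Finset.sum_congr rfl fun j _ => hexp j, Finset.sum_add_distrib,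
      Finset.sum_const, Finset.card_univ, Fintype.card_fin,
      Nat.cast_smul_eq_nsmul ℝ k (A * Aᵀ)]
  have hP0 : P ⟨0, by omega⟩ = 0 := by
    rw [hP]; simp [hE0]
  have hPsum : ∑ j, P j = ∑ j ∈ Finset.univ.erase (⟨0, by omega⟩ : Fin k), P j :=
    (Finset.sum_erase _ hP0).symm
  -- Hermitian facts
  have hAAt : (A * Aᵀ).IsHermitian := by
    have := isHermitian_tmul Aᵀ; rwa [Matrix.transpose_transpose] at this
  have hMMtH : (M * Mᵀ).IsHermitian := by
    have := isHermitian_tmul Mᵀ; rwa [Matrix.transpose_transpose] at this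
  have hS2H : ((k : ℝ) • (A * Aᵀ)).IsHermitian := by
    unfold Matrix.IsHermitian at *
    rw [Matrix.conjTranspose_smul, hAAt]; simp
  -- Weyl
  set Sb := ∑ j ∈ Finset.univ.erase (⟨0, by omega⟩ : Fin k),
      (2 * specNorm A * specNorm (E j) + specNorm (E j) ^ 2) with hSb
  have hwey := weyl hMMtH hS2H ⟨i, hm⟩
  have hdiff : M * Mᵀ - (k : ℝ) • (A * Aᵀ) = ∑ j ∈ Finset.univ.erase (⟨0, by omega⟩ : Fin k), P j := by
    rw [hMMt, hPsum]; abel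
  have hnormbound : specNorm (M * Mᵀ - (k : ℝ) • (A * Aᵀ)) ≤ Sb := by
    rw [hdiff]
    refine (specNorm_sum_le _ _).trans ?_
    refine Finset.sum_le_sum fun j _ => ?_
    have h1 : specNorm (A * (E j)ᵀ) ≤ specNorm A * specNorm (E j) :=
      (specNorm_mul_le _ _).trans (by rw [specNorm_transpose])
    have h2 : specNorm (E j * Aᵀ) ≤ specNorm (E j) * specNorm A :=
      (specNorm_mul_le _ _).trans (by rw [specNorm_transpose])
    have h3 : specNorm (E j * (E j)ᵀ) ≤ specNorm (E j) ^ 2 :=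
      (specNorm_mul_le _ _).trans (by rw [specNorm_transpose, pow_two])
    have h4 := specNorm_add_le (A * (E j)ᵀ) (E j * Aᵀ + E j * (E j)ᵀ)
    have h5 := specNorm_add_le (E j * Aᵀ) (E j * (E j)ᵀ)
    rw [hP]
    calc specNorm (A * (E j)ᵀ + (E j * Aᵀ + E j * (E j)ᵀ))
        ≤ specNorm (A * (E j)ᵀ) + (specNorm (E j * Aᵀ) + specNorm (E j * (E j)ᵀ)) := by
          exact h4.trans (by linarith)
      _ ≤ 2 * specNorm A * specNorm (E j) + specNorm (E j) ^ 2 := by linarith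
  -- identify eigenvalues
  have hdual1 : eigDesc (Mᵀ * M) ⟨i, hkn⟩ = eigDesc (M * Mᵀ) ⟨i, hm⟩ := eig_dual M i hm hkn
  have hdual2 : lam = eigDesc (A * Aᵀ) ⟨i, hm⟩ := eig_dual A i hm hn
  have hscale : eigDesc ((k : ℝ) • (A * Aᵀ)) ⟨i, hm⟩ = k * eigDesc (A * Aᵀ) ⟨i, hm⟩ :=
    eigDesc_smul hAAt _ (by positivity) _
  have hkey : |mu - (k : ℝ) * lam| ≤ Sb := by
    rw [hmu, hdual1, hdual2]
    rw [hscale] at hwey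
    exact hwey.trans hnormbound
  -- unfold sval
  have hsvalM : sval M i = Real.sqrt mu := by rw [sval, dif_pos hkn]
  have hsvalA : sval A i = Real.sqrt lam := by rw [sval, dif_pos hn]
  rw [hsvalM, hsvalA]
  set a := Real.sqrt mu with ha
  have hknn : (0:ℝ) ≤ (k:ℝ) := by positivity
  have hb : Real.sqrt k * Real.sqrt lam = Real.sqrt ((k:ℝ) * lam) :=
    (Real.sqrt_mul hknn lam).symm
  rw [hb]
  set b := Real.sqrt ((k:ℝ) * lam) with hbdef
  have hbpos : 0 < b := Real.sqrt_pos.mpr (by positivity)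
  have ha0 : 0 ≤ a := Real.sqrt_nonneg _
  have ha2 : a ^ 2 = mu := Real.sq_sqrt hmunonneg
  have hb2 : b ^ 2 = (k:ℝ) * lam := Real.sq_sqrt (by positivity)
  have hmain : |a - b| * (a + b) = |mu - (k:ℝ) * lam| := by
    rw [← abs_of_nonneg (by positivity : (0:ℝ) ≤ a + b), ← abs_mul]
    congr 1
    rw [← ha2, ← hb2]; ring
  have hfin : |a - b| * b ≤ Sb := by
    calc |a - b| * b ≤ |a - b| * (a + b) :=
          mul_le_mul_of_nonneg_left (by linarith) (abs_nonneg _)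
      _ = |mu - (k:ℝ) * lam| := hmain
      _ ≤ Sb := hkey
  rw [one_div, ← div_eq_inv_mul]
  exact (le_div_iff₀ hbpos).mpr hfin
end

section
/- The blockwise bound on ‖M̃M̃ᵀ − MMᵀ‖₂, namely Σ_{i=1}^k (2‖A_i‖₂‖E_i‖₂ + ‖E_i‖₂²), is less than or equal to the bound on ‖M̃ᵀM̃ − MᵀM‖₂ given by √(Σ_{i,j} (‖A_i‖₂‖E_j‖₂ + ‖E_i‖₂‖A_j‖₂ + ‖E_i‖₂‖E_j‖₂)²). -/
open Matrix Finset

theorem stmt17 {k : ℕ} (a e : Fin k → ℝ) (ha : ∀ i, 0 ≤ a i) (he : ∀ i, 0 ≤ e i) :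
    ∑ i, (2 * a i * e i + e i ^ 2)
      ≤ Real.sqrt (∑ i, ∑ j, (a i * e j + e i * a j + e i * e j) ^ 2) := by
  have hS : 0 ≤ ∑ i, (2 * a i * e i + e i ^ 2) :=
    Finset.sum_nonneg fun i _ => by nlinarith [ha i, he i]
  rw [Real.le_sqrt hS]
  swap
  · positivity
  calc (∑ i, (2 * a i * e i + e i ^ 2)) ^ 2
      = ∑ i, ∑ j, (2 * a i * e i + e i ^ 2) * (2 * a j * e j + e j ^ 2) := by
        rw [sq, Finset.sum_mul_sum]
    _ ≤ ∑ i, ∑ j, (a i * e j + e i * a j + e i * e j) ^ 2 := by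
        refine Finset.sum_le_sum fun i _ => Finset.sum_le_sum fun j _ => ?_
        nlinarith [sq_nonneg (a i * e j - a j * e i), mul_nonneg (he i) (he j),
          ha i, ha j, he i, he j]
end
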